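/- For every integer n >= 2, 2x times the derivative of P_n^{(alpha,alpha)}(x) equals 2n P_n^{(alpha,alpha)}(x) + (n+alpha) P_{n-2}^{(alpha+1,alpha+1)}(x). -/

import Mathlib

noncomputable def poch (a : ℝ) (k : ℕ) : ℝ := ∏ m ∈ Finset.range k, (a + m)

noncomputable def lag (α : ℝ) (n : ℕ) (x : ℝ) : ℝ :=
  ∑ k ∈ Finset.range (n + 1),
    (-1) ^ k * (poch (α + k + 1) (n - k) / (n - k).factorial) * x ^ k / k.factorial

noncomputable def jacobi (α β : ℝ) (n : ℕ) (x : ℝ) : ℝ :=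
  ∑ k ∈ Finset.range (n + 1),
    poch ((n : ℝ) + α + β + 1) k * poch (α + k + 1) (n - k) /
      (k.factorial * (n - k).factorial) * ((x - 1) / 2) ^ k

noncomputable def charlier (a : ℝ) (n : ℕ) (x : ℝ) : ℝ :=
  ∑ m ∈ Finset.range (n + 1),
    (∏ j ∈ Finset.range m, (x - (j : ℝ))) / m.factorial * (-a) ^ (n - m) / (n - m).factorial
lemma poch_succ (a : ℝ) (k : ℕ) : poch a (k+1) = poch a k * (a + k) :=
  Finset.prod_range_succ _ _

lemma poch_succ' (a : ℝ) (k : ℕ) : poch a (k+1) = a * poch (a+1) k := by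
  unfold poch
  rw [Finset.prod_range_succ',
    Finset.prod_congr rfl (fun m _ => by push_cast; ring :
      ∀ m ∈ Finset.range k, a + ((m+1:ℕ):ℝ) = (a+1) + m)]
  simp [mul_comm]

lemma poch_zero (a : ℝ) : poch a 0 = 1 := rfl
lemma poch_one (a : ℝ) : poch a 1 = a := by simp [poch]

lemma pow_pred_mul (t : ℝ) (k : ℕ) : (k:ℝ) * t^(k-1) * t = (k:ℝ) * t^k := by
  cases k with
  | zero => simp
  | succ k => push_cast; rw [pow_succ]; ring

lemma coeff_key (α N : ℝ) (i m' : ℕ) (hN : N = (i:ℝ) + m' + 2 + α + α + 1) :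
    ((i:ℝ)+1) * (poch N (i+1) * poch (α + ((i:ℝ)+1) + 1) (m'+1) /
        (((i+1).factorial : ℝ) * ((m'+1).factorial : ℝ)))
      = (2*((i:ℝ)+m'+2) - 2*i) *
          (poch N i * poch (α + i + 1) (m'+2) /
            ((i.factorial : ℝ) * ((m'+2).factorial : ℝ)))
        + (((i:ℝ)+m'+2) + α) *
          (poch N i * poch (α + 1 + i + 1) m' /
            ((i.factorial : ℝ) * (m'.factorial : ℝ))) := by
  subst hN
  have e2 : α + ((i:ℝ)+1) + 1 = α + i + 1 + 1 := by ring
  have e4 : α + 1 + (i:ℝ) + 1 = α + i + 1 + 1 := by ring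
  rw [poch_succ, e2, e4, poch_succ, show m'+2 = (m'+1)+1 from rfl, poch_succ,
    poch_succ' (α + (i:ℝ) + 1) m']
  have hf1 : (i.factorial : ℝ) ≠ 0 := by exact_mod_cast i.factorial_ne_zero
  have hf2 : (m'.factorial : ℝ) ≠ 0 := by exact_mod_cast m'.factorial_ne_zero
  simp only [Nat.factorial_succ]
  push_cast
  field_simp
  ring

lemma edge_key (α N : ℝ) (m : ℕ) (hN : N = (m:ℝ) + 2 + α + α + 1) :
    ((m:ℝ)+2) * (poch N (m+2) * poch (α + ((m:ℝ)+2) + 1) 0 /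
        (((m+2).factorial : ℝ) * ((0:ℕ).factorial : ℝ)))
      = (2*((m:ℝ)+2) - 2*((m:ℝ)+1)) *
          (poch N (m+1) * poch (α + ((m:ℝ)+1) + 1) 1 /
            (((m+1).factorial : ℝ) * ((1:ℕ).factorial : ℝ))) := by
  subst hN
  rw [show m+2 = (m+1)+1 from rfl, poch_succ, poch_zero, poch_one]
  have hf1 : ((m+1).factorial : ℝ) ≠ 0 := by exact_mod_cast (m+1).factorial_ne_zero
  simp only [Nat.factorial_succ, Nat.factorial_zero]
  push_cast
  field_simp
  ring

lemma main_sum (α t : ℝ) (m : ℕ) (c d : ℕ → ℝ)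
    (hc : ∀ k, c k = poch (((m+2:ℕ):ℝ) + α + α + 1) k * poch (α + k + 1) ((m+2) - k) /
      ((k.factorial:ℝ) * (((m+2) - k).factorial:ℝ)))
    (hd : ∀ k, d k = poch ((m:ℝ) + (α+1) + (α+1) + 1) k * poch ((α+1) + k + 1) (m - k) /
      ((k.factorial:ℝ) * ((m - k).factorial:ℝ))) :
    2*(2*t+1) * ∑ k ∈ Finset.range (m+3), c k * ((k:ℝ) * t^(k-1) * (1/2))
      = 2*((m+2:ℕ):ℝ) * ∑ k ∈ Finset.range (m+3), c k * t^k
        + (((m+2:ℕ):ℝ) + α) * ∑ k ∈ Finset.range (m+1), d k * t^k := by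
  have hL1 : ∀ k ∈ Finset.range (m+3),
      2*(2*t+1) * (c k * ((k:ℝ)*t^(k-1)*(1/2)))
        = 2*(k:ℝ)*(c k*t^k) + (k:ℝ)*c k*t^(k-1) := by
    intro k _
    calc 2*(2*t+1) * (c k * ((k:ℝ)*t^(k-1)*(1/2)))
        = 2*c k*((k:ℝ)*t^(k-1)*t) + (k:ℝ)*c k*t^(k-1) := by ring
      _ = _ := by rw [pow_pred_mul]; ring
  rw [Finset.mul_sum, Finset.sum_congr rfl hL1, Finset.sum_add_distrib,
    Finset.sum_range_succ' (fun k => (k:ℝ)*c k*t^(k-1)) (m+2)]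
  simp only [Nat.cast_zero, zero_mul, add_zero, Nat.add_sub_cancel, Nat.cast_ofNat]
  have hA : 2*((m+2:ℕ):ℝ) * (∑ k ∈ Finset.range (m+3), c k * t^k)
      = (∑ k ∈ Finset.range (m+3), 2*(k:ℝ)*(c k*t^k))
        + ∑ k ∈ Finset.range (m+3), (2*((m+2:ℕ):ℝ)-2*(k:ℝ))*(c k*t^k) := by
    rw [Finset.mul_sum, ← Finset.sum_add_distrib]
    exact Finset.sum_congr rfl fun k _ => by ring
  have hA2 : ∑ k ∈ Finset.range (m+3), (2*((m+2:ℕ):ℝ)-2*(k:ℝ))*(c k*t^k)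
      = ∑ k ∈ Finset.range (m+2), (2*((m+2:ℕ):ℝ)-2*(k:ℝ))*(c k*t^k) := by
    rw [Finset.sum_range_succ]
    simp
  have key : ∑ i ∈ Finset.range (m+2), ((i+1:ℕ):ℝ)*c (i+1)*t^i
      = (∑ k ∈ Finset.range (m+2), (2*((m+2:ℕ):ℝ)-2*(k:ℝ))*(c k*t^k))
        + (((m+2:ℕ):ℝ) + α) * ∑ k ∈ Finset.range (m+1), d k * t^k := by
    rw [Finset.sum_range_succ, Finset.sum_range_succ
      (fun k => (2*((m+2:ℕ):ℝ)-2*(k:ℝ))*(c k*t^k)) (m+1)]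
    have hterm : ∀ i ∈ Finset.range (m+1),
        ((i+1:ℕ):ℝ)*c (i+1)*t^i
          = (2*((m+2:ℕ):ℝ)-2*(i:ℝ))*(c i*t^i) + (((m+2:ℕ):ℝ)+α)*(d i*t^i) := by
      intro i hi
      have him : i ≤ m := by
        have := Finset.mem_range.mp hi; omega
      obtain ⟨m', hm'⟩ : ∃ m', m = i + m' := ⟨m - i, by omega⟩
      rw [hc, hc, hd]
      rw [show (m+2)-(i+1) = m'+1 by omega, show (m+2)-i = m'+2 by omega,
        show m-i = m' by omega]
      rw [show ((i+1:ℕ):ℝ) = (i:ℝ)+1 by push_cast; ring,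
        show ((m+2:ℕ):ℝ) = (i:ℝ)+m'+2 by rw [hm']; push_cast; ring,
        show (m:ℝ) = (i:ℝ)+m' by rw [hm']; push_cast; ring]
      rw [show (i:ℝ)+(m':ℝ) + (α+1) + (α+1) + 1 = (i:ℝ)+m'+2+α+α+1 by ring]
      linear_combination (coeff_key α ((i:ℝ)+m'+2+α+α+1) i m' (by ring)) * t^i
    have hedge : ((m+1+1:ℕ):ℝ)*c (m+1+1)*t^(m+1)
        = (2*((m+2:ℕ):ℝ)-2*((m+1:ℕ):ℝ))*(c (m+1)*t^(m+1)) := by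
      rw [hc, hc, show m+1+1 = m+2 from rfl]
      rw [show (m+2)-(m+2) = 0 by omega, show (m+2)-(m+1) = 1 by omega]
      rw [show ((m+2:ℕ):ℝ) = (m:ℝ)+2 by push_cast; ring,
        show ((m+1:ℕ):ℝ) = (m:ℝ)+1 by push_cast; ring]
      linear_combination (edge_key α ((m:ℝ)+2+α+α+1) m (by ring)) * t^(m+1)
    rw [Finset.sum_congr rfl hterm, Finset.sum_add_distrib, hedge, Finset.mul_sum]
    ring
  linarith [hA, hA2, key]

theorem stmt7 (α x : ℝ) (n : ℕ) (hn : 2 ≤ n) :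
    2 * x * deriv (jacobi α α n) x =
      2 * n * jacobi α α n x + (n + α) * jacobi (α + 1) (α + 1) (n - 2) x := by
  obtain ⟨m, rfl⟩ : ∃ m, n = m + 2 := ⟨n - 2, by omega⟩
  have hd : HasDerivAt (jacobi α α (m+2))
      (∑ k ∈ Finset.range (m+2+1),
        poch (((m+2:ℕ):ℝ) + α + α + 1) k * poch (α + k + 1) ((m+2) - k) /
          ((k.factorial:ℝ) * (((m+2) - k).factorial:ℝ)) *
          ((k:ℝ) * ((x-1)/2)^(k-1) * (1/2))) x := by
    have hj : jacobi α α (m+2) = fun y => ∑ k ∈ Finset.range (m+2+1),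
        poch (((m+2:ℕ):ℝ) + α + α + 1) k * poch (α + k + 1) ((m+2) - k) /
          ((k.factorial:ℝ) * (((m+2) - k).factorial:ℝ)) * ((y-1)/2)^k := rfl
    rw [hj]
    exact HasDerivAt.fun_sum fun k _ =>
      ((((hasDerivAt_id x).sub_const 1).div_const 2).pow k).const_mul _
  rw [hd.deriv]
  simp only [jacobi]
  set t := (x-1)/2 with ht
  rw [show x = 2*t+1 by rw [ht]; ring]
  exact main_sum α t m _ _ (fun _ => rfl) (fun _ => rfl)
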